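/- Let F_1,…,F_N and G_1,…,G_N be cumulative distribution functions of real random variables, and form the distribution functions of sums of independent random variables: H_F = F_0 ⋆ F_1 ⋆ ⋯ ⋆ F_N and H_G = F_0 ⋆ G_1 ⋆ ⋯ ⋆ G_N (convolution of the corresponding laws, with a common factor F_0). Then sup_x |H_F(x) − H_G(x)| ≤ ∑_{n=1}^{N} sup_x |F_n(x) − G_n(x)|. -/

import Mathlib

open MeasureTheory ProbabilityTheory

/-- Iterated (additive) convolution `μ0 ⋆ ν 1 ⋆ ⋯ ⋆ ν N` of measures on `ℝ`. -/
noncomputable def convChain (μ0 : Measure ℝ) (ν : ℕ → Measure ℝ) : ℕ → Measure ℝ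
  | 0 => μ0
  | n + 1 => Measure.conv (convChain μ0 ν n) (ν (n + 1))

lemma cdf_measurable (μ : Measure ℝ) : Measurable (cdf μ) :=
  (monotone_cdf μ).measurable

lemma abs_cdf_sub_le_one (μ ν : Measure ℝ) (y : ℝ) : |cdf μ y - cdf ν y| ≤ 1 := by
  rw [abs_sub_le_iff]
  constructor <;> nlinarith [cdf_nonneg μ y, cdf_le_one μ y, cdf_nonneg ν y, cdf_le_one ν y]

lemma bdd_cdf_sub (μ ν : Measure ℝ) :
    BddAbove (Set.range fun y : ℝ => |cdf μ y - cdf ν y|) :=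
  ⟨1, by rintro _ ⟨y, rfl⟩; exact abs_cdf_sub_le_one μ ν y⟩

lemma cdf_conv (μ ν : Measure ℝ) [IsProbabilityMeasure μ] [IsProbabilityMeasure ν] (x : ℝ) :
    cdf (μ.conv ν) x = ∫ a, cdf ν (x - a) ∂μ := by
  have h1 : (μ.conv ν) (Set.Iic x) = ∫⁻ a, ν (Set.Iic (x - a)) ∂μ := by
    rw [Measure.conv, Measure.map_apply (by fun_prop) measurableSet_Iic,
      Measure.prod_apply (by exact measurable_add (measurableSet_Iic (a := x)))]
    congr 1
    ext a
    congr 1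
    ext b
    simp [Set.mem_preimage, sub_eq_iff_eq_add]
    constructor <;> intro h <;> linarith
  have h2 : ∀ a : ℝ, ν (Set.Iic (x - a)) = ENNReal.ofReal (cdf ν (x - a)) := fun a =>
    (ofReal_cdf ν (x - a)).symm
  have hint : Integrable (fun a => cdf ν (x - a)) μ := by
    refine (integrable_const (1:ℝ)).mono' ?_ ?_
    · exact ((cdf_measurable ν).comp (measurable_const.sub measurable_id)).aestronglyMeasurable
    · filter_upwards with a
      rw [Real.norm_eq_abs, abs_of_nonneg (cdf_nonneg _ _)]
      exact cdf_le_one _ _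
  rw [cdf_eq_real, measureReal_def, h1]
  simp_rw [h2]
  rw [← MeasureTheory.ofReal_integral_eq_lintegral_ofReal hint
    (Filter.Eventually.of_forall fun a => cdf_nonneg _ _),
    ENNReal.toReal_ofReal (integral_nonneg fun a => cdf_nonneg _ _)]

lemma cdf_integrable (μ ν : Measure ℝ) [IsFiniteMeasure μ] (x : ℝ) :
    Integrable (fun a => cdf ν (x - a)) μ := by
  refine (integrable_const (1:ℝ)).mono' ?_ ?_
  · exact ((cdf_measurable ν).comp (measurable_const.sub measurable_id)).aestronglyMeasurable
  · filter_upwards with a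
    rw [Real.norm_eq_abs, abs_of_nonneg (cdf_nonneg _ _)]
    exact cdf_le_one _ _

/-- Convolving with a common probability measure on the left doesn't increase sup distance. -/
lemma cdf_conv_left_le (μ ν η : Measure ℝ) [IsProbabilityMeasure μ] [IsProbabilityMeasure ν]
    [IsProbabilityMeasure η] (C : ℝ) (hC : ∀ y, |cdf ν y - cdf η y| ≤ C) (x : ℝ) :
    |cdf (μ.conv ν) x - cdf (μ.conv η) x| ≤ C := by
  rw [cdf_conv, cdf_conv, ← integral_sub (cdf_integrable μ ν x) (cdf_integrable μ η x)]
  calc |∫ a, (cdf ν (x - a) - cdf η (x - a)) ∂μ|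
      ≤ ∫ a, |cdf ν (x - a) - cdf η (x - a)| ∂μ := by
        simpa [Real.norm_eq_abs] using norm_integral_le_integral_norm (μ := μ) fun a => cdf ν (x - a) - cdf η (x - a)
    _ ≤ ∫ _, C ∂μ := by
        refine integral_mono_of_nonneg (Filter.Eventually.of_forall fun a => abs_nonneg _) ?_
          (Filter.Eventually.of_forall fun a => hC _)
        exact integrable_const C
    _ = C := by simp

lemma convChain_prob (μ0 : Measure ℝ) (ν : ℕ → Measure ℝ) [IsProbabilityMeasure μ0]
    (hν : ∀ n, IsProbabilityMeasure (ν n)) (n : ℕ) :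
    IsProbabilityMeasure (convChain μ0 ν n) := by
  induction n with
  | zero => exact ‹IsProbabilityMeasure μ0›
  | succ n ih =>
    have := hν (n + 1)
    exact Measure.probabilitymeasure_of_probabilitymeasures_conv _ _

/-- Kolmogorov distance bound for convolutions with a common factor: if
`H_F = F_0 ⋆ F_1 ⋆ ⋯ ⋆ F_N` and `H_G = F_0 ⋆ G_1 ⋆ ⋯ ⋆ G_N` are the CDFs of sums of
independent random variables, then
`sup_x |H_F x - H_G x| ≤ ∑_{n=1}^{N} sup_x |F_n x - G_n x|`. -/
theorem cdf_conv_chain_dist_le (μ0 : Measure ℝ) (ν η : ℕ → Measure ℝ)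
    [IsProbabilityMeasure μ0]
    (hν : ∀ n, IsProbabilityMeasure (ν n)) (hη : ∀ n, IsProbabilityMeasure (η n))
    (N : ℕ) (x : ℝ) :
    |cdf (convChain μ0 ν N) x - cdf (convChain μ0 η N) x| ≤
      ∑ n ∈ Finset.Icc 1 N, ⨆ y : ℝ, |cdf (ν n) y - cdf (η n) y| := by
  induction N generalizing x with
  | zero => simp [convChain]
  | succ N ih =>
    have hPν := convChain_prob μ0 ν hν N
    have hPη := convChain_prob μ0 η hη N
    have h1 := hν (N + 1)
    have h2 := hη (N + 1)
    rw [Finset.sum_Icc_succ_top (by omega)]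
    show |cdf ((convChain μ0 ν N).conv (ν (N+1))) x
        - cdf ((convChain μ0 η N).conv (η (N+1))) x| ≤ _
    have step1 : |cdf ((convChain μ0 ν N).conv (ν (N+1))) x
        - cdf ((convChain μ0 η N).conv (ν (N+1))) x| ≤
        ∑ n ∈ Finset.Icc 1 N, ⨆ y : ℝ, |cdf (ν n) y - cdf (η n) y| := by
      rw [Measure.conv_comm (convChain μ0 ν N), Measure.conv_comm (convChain μ0 η N)]
      exact cdf_conv_left_le _ _ _ _ (fun y => ih y) x
    have step2 : |cdf ((convChain μ0 η N).conv (ν (N+1))) x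
        - cdf ((convChain μ0 η N).conv (η (N+1))) x| ≤
        ⨆ y : ℝ, |cdf (ν (N+1)) y - cdf (η (N+1)) y| :=
      cdf_conv_left_le _ _ _ _ (fun y => le_ciSup (bdd_cdf_sub _ _) y) x
    refine (abs_sub_le _ (cdf ((convChain μ0 η N).conv (ν (N+1))) x) _).trans ?_
    exact add_le_add step1 step2
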